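/- For every nonnegative integer N and complex numbers z, w (avoiding poles of the Gamma functions involved), we have \(\sum_{i=0}^{N} (-1)^i \binom{N}{i} \frac{\Gamma(z+i)}{\Gamma(w+i)} = \frac{\Gamma(z)}{\Gamma(w-z)} \cdot \frac{\Gamma(w-z+N)}{\Gamma(w+N)}\). -/

import Mathlib

open Complex Finset

/-- Gamma-binomial identity:
`∑_{i=0}^N (-1)^i C(N,i) Γ(z+i)/Γ(w+i) = Γ(z)/Γ(w-z) · Γ(w-z+N)/Γ(w+N)`. -/
theorem stmt0 (N : ℕ) (z w : ℂ)
    (hz : ∀ n : ℕ, z ≠ -n) (hw : ∀ n : ℕ, w ≠ -n) (hwz : ∀ n : ℕ, w - z ≠ -n) :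
    ∑ i ∈ Finset.range (N + 1),
        (-1 : ℂ) ^ i * (N.choose i : ℂ) * (Complex.Gamma (z + i) / Complex.Gamma (w + i))
      = Complex.Gamma z / Complex.Gamma (w - z) *
          (Complex.Gamma (w - z + N) / Complex.Gamma (w + N)) := by
  induction N generalizing z w with
  | zero =>
      have hΓwz : Complex.Gamma (w - z) ≠ 0 := Complex.Gamma_ne_zero hwz
      simp only [zero_add, Finset.range_one, Finset.sum_singleton, pow_zero, Nat.choose_zero_right,
        Nat.cast_zero, Nat.cast_one, add_zero, one_mul]
      field_simp
  | succ N ih =>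
      -- shifted hypotheses
      have hz1 : ∀ n : ℕ, z + 1 ≠ -n := by
        intro n h
        apply hz (n + 1)
        push_cast
        linear_combination h
      have hw1 : ∀ n : ℕ, w + 1 ≠ -n := by
        intro n h
        apply hw (n + 1)
        push_cast
        linear_combination h
      have hwz1 : ∀ n : ℕ, (w + 1) - (z + 1) ≠ -n := by
        intro n
        simpa using hwz n
      have key : ∑ i ∈ Finset.range (N + 1 + 1),
          (-1 : ℂ) ^ i * ((N + 1).choose i : ℂ) *
            (Complex.Gamma (z + i) / Complex.Gamma (w + i))
          = (∑ i ∈ Finset.range (N + 1),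
              (-1 : ℂ) ^ i * (N.choose i : ℂ) *
                (Complex.Gamma (z + i) / Complex.Gamma (w + i)))
            - ∑ i ∈ Finset.range (N + 1),
              (-1 : ℂ) ^ i * (N.choose i : ℂ) *
                (Complex.Gamma ((z + 1) + i) / Complex.Gamma ((w + 1) + i)) := by
        rw [Finset.sum_range_succ' (fun i => (-1 : ℂ) ^ i * ((N + 1).choose i : ℂ) *
          (Complex.Gamma (z + i) / Complex.Gamma (w + i)))]
        have split : ∀ k ∈ Finset.range (N + 1),
            (-1 : ℂ) ^ (k + 1) * (((N + 1).choose (k + 1) : ℕ) : ℂ) *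
              (Complex.Gamma (z + ((k + 1 : ℕ) : ℂ)) / Complex.Gamma (w + ((k + 1 : ℕ) : ℂ)))
            = (-1 : ℂ) ^ (k + 1) * ((N.choose (k + 1) : ℕ) : ℂ) *
                (Complex.Gamma (z + ((k + 1 : ℕ) : ℂ)) / Complex.Gamma (w + ((k + 1 : ℕ) : ℂ)))
              + (-1 : ℂ) ^ (k + 1) * ((N.choose k : ℕ) : ℂ) *
                (Complex.Gamma (z + ((k + 1 : ℕ) : ℂ)) / Complex.Gamma (w + ((k + 1 : ℕ) : ℂ))) := by
          intro k _
          rw [Nat.choose_succ_succ']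
          push_cast
          ring
        rw [Finset.sum_congr rfl split, Finset.sum_add_distrib]
        have h1 : (∑ k ∈ Finset.range (N + 1),
            (-1 : ℂ) ^ (k + 1) * ((N.choose (k + 1) : ℕ) : ℂ) *
              (Complex.Gamma (z + ((k + 1 : ℕ) : ℂ)) / Complex.Gamma (w + ((k + 1 : ℕ) : ℂ))))
            = ∑ k ∈ Finset.range N,
            (-1 : ℂ) ^ (k + 1) * ((N.choose (k + 1) : ℕ) : ℂ) *
              (Complex.Gamma (z + ((k + 1 : ℕ) : ℂ)) / Complex.Gamma (w + ((k + 1 : ℕ) : ℂ))) := by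
          rw [Finset.sum_range_succ]
          simp
        have h2 : (∑ k ∈ Finset.range (N + 1),
            (-1 : ℂ) ^ (k + 1) * ((N.choose k : ℕ) : ℂ) *
              (Complex.Gamma (z + ((k + 1 : ℕ) : ℂ)) / Complex.Gamma (w + ((k + 1 : ℕ) : ℂ))))
            = - ∑ i ∈ Finset.range (N + 1),
              (-1 : ℂ) ^ i * (N.choose i : ℂ) *
                (Complex.Gamma ((z + 1) + i) / Complex.Gamma ((w + 1) + i)) := by
          rw [← Finset.sum_neg_distrib]
          apply Finset.sum_congr rfl
          intro k _
          have e1 : (z + ((k + 1 : ℕ) : ℂ)) = (z + 1) + (k : ℂ) := by push_cast; ring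
          have e2 : (w + ((k + 1 : ℕ) : ℂ)) = (w + 1) + (k : ℂ) := by push_cast; ring
          rw [e1, e2]
          ring
        rw [h1, h2]
        rw [Finset.sum_range_succ' (fun i => (-1 : ℂ) ^ i * (N.choose i : ℂ) *
          (Complex.Gamma (z + i) / Complex.Gamma (w + i)))]
        simp only [Nat.choose_zero_right, Nat.cast_one]
        ring
      rw [key, ih z w hz hw hwz, ih (z + 1) (w + 1) hz1 hw1 hwz1]
      have hzz : w + 1 - (z + 1) = w - z := by ring
      rw [hzz]
      -- functional equations
      have hz0 : z ≠ 0 := by simpa using hz 0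
      have hwN : w + N ≠ 0 := by
        intro h
        apply hw N
        linear_combination h
      have hwzN : w - z + N ≠ 0 := by
        intro h
        apply hwz N
        linear_combination h
      have hΓz1 : Complex.Gamma (z + 1) = z * Complex.Gamma z := Complex.Gamma_add_one z hz0
      have hΓwN : Complex.Gamma (w + (N + 1 : ℕ)) = (w + N) * Complex.Gamma (w + N) := by
        have : (w + ((N : ℂ) + 1)) = (w + N) + 1 := by ring
        push_cast
        rw [this, Complex.Gamma_add_one _ hwN]
      have hΓwzN : Complex.Gamma (w - z + (N + 1 : ℕ))
          = (w - z + N) * Complex.Gamma (w - z + N) := by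
        have : (w - z + ((N : ℂ) + 1)) = (w - z + N) + 1 := by ring
        push_cast
        rw [this, Complex.Gamma_add_one _ hwzN]
      have hΓw1N : Complex.Gamma (w + 1 + (N : ℂ)) = (w + N) * Complex.Gamma (w + N) := by
        have : (w + 1 + (N : ℂ)) = (w + N) + 1 := by ring
        rw [this, Complex.Gamma_add_one _ hwN]
      push_cast
      push_cast at hΓwN hΓwzN
      rw [hΓz1, hΓwN, hΓwzN, hΓw1N]
      have hΓwz : Complex.Gamma (w - z) ≠ 0 := Complex.Gamma_ne_zero hwz
      have hΓwNne : Complex.Gamma (w + N) ≠ 0 := by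
        apply Complex.Gamma_ne_zero
        intro m h
        apply hw (N + m)
        push_cast
        linear_combination h
      field_simp
      ring
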